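/- Fix integers n > n₀ ≥ 1 and ε > 0. The function x ↦ ((x + 1)^{n₀} - 1)/((x + 1)^n - 1) is decreasing on (ε, ∞) whenever n ≥ n₀(ε + 1)^{n₀}/((ε + 1)^{n₀} - 1). -/

import Mathlib

/-- For integers `n > n₀ ≥ 1` and `ε > 0`, the function
`x ↦ ((x+1)^{n₀} - 1)/((x+1)^n - 1)` is (strictly) decreasing on `(ε, ∞)` whenever
`n ≥ n₀(ε+1)^{n₀}/((ε+1)^{n₀} - 1)`. -/
theorem ratio_strictAntiOn (n₀ n : ℕ) (hn₀ : 1 ≤ n₀) (hn : n₀ < n) (ε : ℝ) (hε : 0 < ε)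
    (hN : (n₀ : ℝ) * (ε + 1) ^ n₀ / ((ε + 1) ^ n₀ - 1) ≤ (n : ℝ)) :
    StrictAntiOn (fun x : ℝ => ((x + 1) ^ n₀ - 1) / ((x + 1) ^ n - 1)) (Set.Ioi ε) := by
  have hv : (1:ℝ) < ε + 1 := by linarith
  have hva : (1:ℝ) < (ε + 1) ^ n₀ := one_lt_pow₀ hv (by omega)
  have hA0 : (n₀ : ℝ) * (ε + 1) ^ n₀ ≤ (n : ℝ) * ((ε + 1) ^ n₀ - 1) := by
    rw [div_le_iff₀ (by linarith)] at hN; linarith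
  have hnn : (n₀ : ℝ) < (n : ℝ) := by exact_mod_cast hn
  apply strictAntiOn_of_deriv_neg (convex_Ioi ε)
  · apply ContinuousOn.div
    · fun_prop
    · fun_prop
    · intro x hx
      have hx' : ε ≤ x := le_of_lt hx
      have : (1:ℝ) < (x + 1) ^ n := one_lt_pow₀ (by linarith) (by omega)
      intro h; rw [sub_eq_zero] at h; linarith [this]
  · intro x hx
    rw [interior_Ioi] at hx
    have hxε : ε < x := hx
    have hu : (1:ℝ) < x + 1 := by linarith
    have hu0 : (0:ℝ) < x + 1 := by linarith
    have ha : (1:ℝ) < (x + 1) ^ n₀ := one_lt_pow₀ hu (by omega)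
    have hb : (1:ℝ) < (x + 1) ^ n := one_lt_pow₀ hu (by omega)
    have hden : (0:ℝ) < (x + 1) ^ n - 1 := by linarith
    have hd1 : HasDerivAt (fun x : ℝ => x + 1) 1 x := (hasDerivAt_id x).add_const 1
    have hg : HasDerivAt (fun x : ℝ => (x + 1) ^ n₀ - 1)
        ((n₀ : ℝ) * (x + 1) ^ (n₀ - 1) * 1) x := (hd1.pow n₀).sub_const 1
    have hh : HasDerivAt (fun x : ℝ => (x + 1) ^ n - 1)
        ((n : ℝ) * (x + 1) ^ (n - 1) * 1) x := (hd1.pow n).sub_const 1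
    have hd : HasDerivAt (fun x : ℝ => ((x + 1) ^ n₀ - 1) / ((x + 1) ^ n - 1)) _ x := hg.div hh hden.ne'
    rw [hd.deriv]
    apply div_neg_of_neg_of_pos _ (by positivity)
    -- key algebraic inequality
    have hpu : (x + 1) ^ (n₀ - 1) * (x + 1) = (x + 1) ^ n₀ := by
      rw [← pow_succ]; congr 1; omega
    have hqu : (x + 1) ^ (n - 1) * (x + 1) = (x + 1) ^ n := by
      rw [← pow_succ]; congr 1; omega
    have hp : (0:ℝ) < (x + 1) ^ (n₀ - 1) := by positivity
    have hq : (0:ℝ) < (x + 1) ^ (n - 1) := by positivity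
    -- Step A at u = x+1 : n₀ * u^n₀ ≤ n * (u^n₀ - 1)
    have hpow : (ε + 1) ^ n₀ ≤ (x + 1) ^ n₀ :=
      pow_le_pow_left₀ (by linarith) (by linarith) n₀
    have hA : (n₀ : ℝ) * (x + 1) ^ n₀ ≤ (n : ℝ) * ((x + 1) ^ n₀ - 1) := by
      nlinarith [hA0, hpow, hnn]
    -- numerator negative
    have key : ((n₀ : ℝ) * (x + 1) ^ (n₀ - 1) * 1 * ((x + 1) ^ n - 1) -
        ((x + 1) ^ n₀ - 1) * ((n : ℝ) * (x + 1) ^ (n - 1) * 1)) * (x + 1) < 0 := by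
      have e1 : ((n₀ : ℝ) * (x + 1) ^ (n₀ - 1) * 1 * ((x + 1) ^ n - 1) -
          ((x + 1) ^ n₀ - 1) * ((n : ℝ) * (x + 1) ^ (n - 1) * 1)) * (x + 1)
          = (n₀ : ℝ) * (x + 1) ^ n₀ * ((x + 1) ^ n - 1) -
            ((x + 1) ^ n₀ - 1) * ((n : ℝ) * (x + 1) ^ n) := by
        rw [← hpu, ← hqu]; ring
      rw [e1]
      nlinarith [hA, hb, ha, mul_pos (sub_pos.2 ha) (sub_pos.2 hb)]
    nlinarith [key, hu0]
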